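/- Let n ≥ 2, let τ_n : ℤ → ℤ be the bijection i ↦ n+1−i, let w* = τ_n ∘ w ∘ τ_n for w ∈ S̃_n (a group automorphism of S̃_n), and let I_* = {w ∈ S̃_n : w⁻¹ = w*}. Define f : I_* → ℕ by f(w) = ⌊ #{i ∈ {1,…,n} : w(i) ≡ 1−i (mod n)} / 2 ⌋. Then f satisfies the three properties characterizing Hultman's twisted absolute length: (a) f(id) = 0; (b) f(s·w·s*) = f(w) for every w ∈ I_* and every simple generator s ∈ {s_0, s_1, …, s_{n−1}}; (c) whenever w ∈ I_* and s is a simple generator with w·s ∈ I_*, one has f(w·s) − f(w) = ℓ(w·s) − ℓ(w) (as integers). -/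

import Mathlib

open scoped Classical

noncomputable section

/-- The function underlying the simple generator `s_i` of the affine symmetric group. -/
def sFun (n i : ℕ) (j : ℤ) : ℤ :=
  if (n : ℤ) ∣ j - (i : ℤ) then j + 1
  else if (n : ℤ) ∣ j - ((i : ℤ) + 1) then j - 1
  else j

lemma sFun_invol (n i : ℕ) (h : ¬ (n : ℤ) ∣ 1) : Function.Involutive (sFun n i) := by
  intro j
  unfold sFun
  by_cases h1 : (n : ℤ) ∣ j - (i : ℤ)
  · have h2 : ¬ (n : ℤ) ∣ (j + 1) - (i : ℤ) := by
      intro hd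
      have h3 : (n : ℤ) ∣ ((j + 1) - (i : ℤ)) - (j - (i : ℤ)) := dvd_sub hd h1
      have h4 : ((j + 1) - (i : ℤ)) - (j - (i : ℤ)) = 1 := by ring
      rw [h4] at h3
      exact h h3
    have h3 : (n : ℤ) ∣ (j + 1) - ((i : ℤ) + 1) := by
      have h4 : (j + 1) - ((i : ℤ) + 1) = j - (i : ℤ) := by ring
      rw [h4]
      exact h1
    rw [if_pos h1, if_neg h2, if_pos h3]
    ring
  · by_cases h2 : (n : ℤ) ∣ j - ((i : ℤ) + 1)
    · have h3 : (n : ℤ) ∣ (j - 1) - (i : ℤ) := by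
        have h4 : (j - 1) - (i : ℤ) = j - ((i : ℤ) + 1) := by ring
        rw [h4]
        exact h2
      rw [if_neg h1, if_pos h2, if_pos h3]
      ring
    · rw [if_neg h1, if_neg h2, if_neg h1, if_neg h2]

/-- The simple generator `s_i` of the affine symmetric group `S̃_n`:
`j ↦ j+1` if `j ≡ i (mod n)`, `j ↦ j-1` if `j ≡ i+1 (mod n)`, `j ↦ j` otherwise.
(For the degenerate case `n = 1`, where this recipe does not define a bijection,
we use the identity; all results below assume `n ≥ 2`.) -/
def sGen (n i : ℕ) : Equiv.Perm ℤ :=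
  if h : (n : ℤ) ∣ 1 then 1
  else ⟨sFun n i, sFun n i, sFun_invol n i h, sFun_invol n i h⟩

/-- Membership in the affine symmetric group `S̃_n`: a bijection `w : ℤ → ℤ` with
`w (i + n) = w i + n` for all `i` and `∑_{i=1}^n w i = ∑_{i=1}^n i`. -/
def IsAffinePerm (n : ℕ) (w : Equiv.Perm ℤ) : Prop :=
  (∀ i : ℤ, w (i + (n : ℤ)) = w i + (n : ℤ)) ∧
    ∑ i ∈ Finset.Icc (1 : ℤ) (n : ℤ), w i = ∑ i ∈ Finset.Icc (1 : ℤ) (n : ℤ), i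

/-- The length of `w ∈ S̃_n`: the number of pairs `(i, j)` with `i < j`, `1 ≤ j ≤ n`
and `w i > w j`. -/
def ellA (n : ℕ) (w : Equiv.Perm ℤ) : ℕ :=
  Set.ncard {p : ℤ × ℤ | p.1 < p.2 ∧ 1 ≤ p.2 ∧ p.2 ≤ (n : ℤ) ∧ w p.2 < w p.1}

/-- The absolute length of an involution `w ∈ S̃_n`:
`(n − #{i ∈ {1,…,n} : w i = i}) / 2`. -/
def ellAbs (n : ℕ) (w : Equiv.Perm ℤ) : ℕ :=
  (n - Set.ncard {i : ℤ | 1 ≤ i ∧ i ≤ (n : ℤ) ∧ w i = i}) / 2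

/-- `Ω_n`: involutions in `S̃_n` which are minimal length double coset representatives
for the parabolic subgroup generated by `s_1, …, s_{n-1}`. -/
def OmegaSet (n : ℕ) : Set (Equiv.Perm ℤ) :=
  {w | IsAffinePerm n w ∧ w * w = 1 ∧
    ∀ i : ℕ, 1 ≤ i → i ≤ n - 1 →
      ellA n (sGen n i * w) = ellA n w + 1 ∧ ellA n (w * sGen n i) = ellA n w + 1}

/-- Inverse of a power series with constant term `1` (via `invOfUnit`). -/
def pinv (f : PowerSeries ℤ) : PowerSeries ℤ := PowerSeries.invOfUnit f 1

/-- Substitution of `q ↦ q²` in a power series: `(sq2 f)(q) = f(q²)`. -/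
def sq2 (f : PowerSeries ℤ) : PowerSeries ℤ :=
  PowerSeries.mk fun j => if 2 ∣ j then PowerSeries.coeff (R := ℤ) (j / 2) f else 0

/-- The `q`-integer `[m]_q = 1 + q + ⋯ + q^{m-1}` as a power series. -/
def qInt (m : ℕ) : PowerSeries ℤ := ∑ i ∈ Finset.range m, (PowerSeries.X : PowerSeries ℤ) ^ i

/-- The `q`-factorial `[m]_q!`. -/
def qFact (m : ℕ) : PowerSeries ℤ := ∏ k ∈ Finset.range m, qInt (k + 1)

/-- The Gaussian binomial coefficient `binom(m, k)_q = [m]_q!/([k]_q![m-k]_q!)`. -/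
def qBinom (m k : ℕ) : PowerSeries ℤ := qFact m * pinv (qFact k * qFact (m - k))

/-- The `q`-Pochhammer symbol `(−q^{k+1}; q)_m = ∏_{j=0}^{m-1} (1 + q^{k+1+j})`. -/
def qPochNeg (k m : ℕ) : PowerSeries ℤ :=
  ∏ j ∈ Finset.range m, (1 + (PowerSeries.X : PowerSeries ℤ) ^ (k + 1 + j))

/-- The Poincaré series `P̃_n(q) = ∑_{w ∈ S̃_n} q^{ℓ(w)}`, defined coefficientwise:
the coefficient of `q^j` is the (finite) number of `w ∈ S̃_n` with `ℓ(w) = j`. -/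
def Ptilde (n : ℕ) : PowerSeries ℤ :=
  PowerSeries.mk fun j =>
    (Nat.card {w : Equiv.Perm ℤ // IsAffinePerm n w ∧ ellA n w = j} : ℤ)

/-- The generating set `{s_i : i ∈ K_w}` where
`K_w = {i ∈ {1,…,n−1} : w s_i w ∈ {s_1,…,s_{n−1}}}`. -/
def Kgens (n : ℕ) (w : Equiv.Perm ℤ) : Set (Equiv.Perm ℤ) :=
  {y | ∃ i : ℕ, 1 ≤ i ∧ i ≤ n - 1 ∧ y = sGen n i ∧
      ∃ j : ℕ, 1 ≤ j ∧ j ≤ n - 1 ∧ w * sGen n i * w = sGen n j}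

/-- `F_w(q) = ∑_{x ∈ W_{K_w}, w x w = x} q^{ℓ(x)}`, defined coefficientwise. -/
def Fw (n : ℕ) (w : Equiv.Perm ℤ) : PowerSeries ℤ :=
  PowerSeries.mk fun j =>
    (Nat.card {x : Equiv.Perm ℤ //
        x ∈ Subgroup.closure (Kgens n w) ∧ w * x * w = x ∧ ellA n x = j} : ℤ)

/-- The `q`-part of the summand of `T_n(s,q)` attached to `w ∈ Ω_n`:
`q^{ℓ(w)} ((1−q)/(1+q))^{ℓ'(w)} P_n(q²) / F_w(q)`. -/
def termW (n : ℕ) (w : Equiv.Perm ℤ) : PowerSeries ℤ :=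
  (PowerSeries.X : PowerSeries ℤ) ^ ellA n w *
    ((1 - PowerSeries.X) * pinv (1 + PowerSeries.X)) ^ ellAbs n w *
    sq2 (qFact n) * pinv (Fw n w)

/-- The coefficient of `s^k` in `∑_{w ∈ Ω_n} q^{ℓ(w)} (s(1−q)/(1+q))^{ℓ'(w)} P_n(q²)/F_w(q)`,
computed coefficientwise in `q` (the sum over `w` converges coefficientwise). -/
def innerSum (n k : ℕ) : PowerSeries ℤ :=
  PowerSeries.mk fun j =>
    ∑' w : {w : Equiv.Perm ℤ // w ∈ OmegaSet n ∧ ellAbs n w = k},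
      PowerSeries.coeff (R := ℤ) j (termW n w.1)

/-- The power series `T_n(s, q) ∈ ℤ[[s, q]]`, realized as an element of `(ℤ[[q]])[[s]]`:
`T_n(s,q) = (P̃_n(q)/P̃_n(q²)) ∑_{w ∈ Ω_n} q^{ℓ(w)} (s(1−q)/(1+q))^{ℓ'(w)} P_n(q²)/F_w(q)`. -/
def Tser (n : ℕ) : PowerSeries (PowerSeries ℤ) :=
  PowerSeries.mk fun k => Ptilde n * pinv (sq2 (Ptilde n)) * innerSum n k

end

lemma tau_aux (n : ℕ) : ∀ i : ℤ, (n : ℤ) + 1 - ((n : ℤ) + 1 - i) = i := fun i => by ring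

/-- The bijection `τ_n : ℤ → ℤ`, `i ↦ n + 1 − i`. -/
def tauN (n : ℕ) : Equiv.Perm ℤ :=
  ⟨fun i => (n : ℤ) + 1 - i, fun i => (n : ℤ) + 1 - i, tau_aux n, tau_aux n⟩

/-- `f(w) = ⌊#{i ∈ {1,…,n} : w i ≡ 1 − i (mod n)}/2⌋`. -/
noncomputable def fTw (n : ℕ) (w : Equiv.Perm ℤ) : ℕ :=
  Set.ncard {i : ℤ | 1 ≤ i ∧ i ≤ (n : ℤ) ∧ (n : ℤ) ∣ w i - (1 - i)} / 2


/-! ### Auxiliary lemmas for Statement 10 -/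

section St10Aux

lemma st10_ndvd1 {n : ℕ} (hn : 2 ≤ n) : ¬ (n : ℤ) ∣ 1 := by
  intro h
  have h1 := Int.le_of_dvd one_pos h
  have h2 : (2:ℤ) ≤ (n:ℤ) := by exact_mod_cast hn
  omega

lemma st10_dvd_small {n : ℕ} {x : ℤ} (hn0 : 0 < (n:ℤ)) (hd : (n:ℤ) ∣ x)
    (h1 : -(n:ℤ) < x) (h2 : x < (n:ℤ)) : x = 0 := by
  obtain ⟨k, rfl⟩ := hd
  rcases lt_trichotomy k 0 with h | h | h
  · exfalso
    have hk : k ≤ -1 := by omega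
    have := mul_le_mul_of_nonneg_left hk (le_of_lt hn0)
    rw [mul_neg_one] at this
    linarith
  · rw [h, mul_zero]
  · exfalso
    have hk : (1:ℤ) ≤ k := h
    have := mul_le_mul_of_nonneg_left hk (le_of_lt hn0)
    rw [mul_one] at this
    linarith

lemma st10_perInt {n : ℕ} {g : ℤ → ℤ} (hper : ∀ x : ℤ, g (x + (n:ℤ)) = g x + (n:ℤ))
    (k x : ℤ) : g (x + k * (n:ℤ)) = g x + k * (n:ℤ) := by
  induction k using Int.induction_on with
  | zero => simp
  | succ m ih =>
      have h1 : x + ((m:ℤ) + 1) * (n:ℤ) = (x + (m:ℤ) * (n:ℤ)) + (n:ℤ) := by ring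
      rw [h1, hper, ih]; ring
  | pred m ih =>
      have h1 : x + (-(m:ℤ) - 1) * (n:ℤ) + (n:ℤ) = x + (-(m:ℤ)) * (n:ℤ) := by ring
      have h2 := hper (x + (-(m:ℤ) - 1) * (n:ℤ))
      rw [h1, ih] at h2
      linarith

lemma st10_perCongr {n : ℕ} {g : ℤ → ℤ} (hper : ∀ x : ℤ, g (x + (n:ℤ)) = g x + (n:ℤ))
    {x y : ℤ} (h : (n:ℤ) ∣ x - y) : g x = g y + (x - y) := by
  obtain ⟨k, hk⟩ := h
  have hx : x = y + k * (n:ℤ) := by rw [mul_comm] at hk; linarith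
  rw [hx, st10_perInt hper k y]
  ring

lemma st10_sApply {n : ℕ} (hn : 2 ≤ n) (i : ℕ) (j : ℤ) : sGen n i j = sFun n i j := by
  unfold sGen
  rw [dif_neg (st10_ndvd1 hn)]
  rfl

lemma st10_sAdd {n : ℕ} (hn : 2 ≤ n) {i : ℕ} {j : ℤ} (h : (n:ℤ) ∣ j - (i:ℤ)) :
    sGen n i j = j + 1 := by
  rw [st10_sApply hn]
  unfold sFun
  rw [if_pos h]

lemma st10_sSub {n : ℕ} (hn : 2 ≤ n) {i : ℕ} {j : ℤ} (h : (n:ℤ) ∣ j - ((i:ℤ)+1)) :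
    sGen n i j = j - 1 := by
  have h1 : ¬ (n:ℤ) ∣ j - (i:ℤ) := by
    intro hd
    have h3 := dvd_sub hd h
    have h4 : (j - (i:ℤ)) - (j - ((i:ℤ)+1)) = 1 := by ring
    rw [h4] at h3
    exact st10_ndvd1 hn h3
  rw [st10_sApply hn]
  unfold sFun
  rw [if_neg h1, if_pos h]

lemma st10_sId {n : ℕ} (hn : 2 ≤ n) {i : ℕ} {j : ℤ} (h1 : ¬ (n:ℤ) ∣ j - (i:ℤ))
    (h2 : ¬ (n:ℤ) ∣ j - ((i:ℤ)+1)) : sGen n i j = j := by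
  rw [st10_sApply hn]
  unfold sFun
  rw [if_neg h1, if_neg h2]

lemma st10_sCases {n : ℕ} (hn : 2 ≤ n) (i : ℕ) (j : ℤ) :
    ((n:ℤ) ∣ j - (i:ℤ) ∧ sGen n i j = j + 1) ∨
    ((n:ℤ) ∣ j - ((i:ℤ)+1) ∧ sGen n i j = j - 1) ∨
    (¬ (n:ℤ) ∣ j - (i:ℤ) ∧ ¬ (n:ℤ) ∣ j - ((i:ℤ)+1) ∧ sGen n i j = j) := by
  by_cases h1 : (n:ℤ) ∣ j - (i:ℤ)
  · exact Or.inl ⟨h1, st10_sAdd hn h1⟩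
  by_cases h2 : (n:ℤ) ∣ j - ((i:ℤ)+1)
  · exact Or.inr (Or.inl ⟨h2, st10_sSub hn h2⟩)
  · exact Or.inr (Or.inr ⟨h1, h2, st10_sId hn h1 h2⟩)

lemma st10_sPer {n : ℕ} (hn : 2 ≤ n) (i : ℕ) : ∀ x : ℤ,
    sGen n i (x + (n:ℤ)) = sGen n i x + (n:ℤ) := by
  intro x
  rcases st10_sCases hn i x with ⟨h, e⟩ | ⟨h, e⟩ | ⟨h1, h2, e⟩
  · have hd : (n:ℤ) ∣ x + (n:ℤ) - (i:ℤ) := by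
      obtain ⟨k, hk⟩ := h
      exact ⟨k + 1, by rw [mul_add, mul_one]; linarith⟩
    rw [st10_sAdd hn hd, e]; ring
  · have hd : (n:ℤ) ∣ x + (n:ℤ) - ((i:ℤ)+1) := by
      obtain ⟨k, hk⟩ := h
      exact ⟨k + 1, by rw [mul_add, mul_one]; linarith⟩
    rw [st10_sSub hn hd, e]; ring
  · have hd1 : ¬ (n:ℤ) ∣ x + (n:ℤ) - (i:ℤ) := by
      intro hd
      obtain ⟨k, hk⟩ := hd
      exact h1 ⟨k - 1, by rw [mul_sub, mul_one]; linarith⟩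
    have hd2 : ¬ (n:ℤ) ∣ x + (n:ℤ) - ((i:ℤ)+1) := by
      intro hd
      obtain ⟨k, hk⟩ := hd
      exact h2 ⟨k - 1, by rw [mul_sub, mul_one]; linarith⟩
    rw [st10_sId hn hd1 hd2, e]

lemma st10_sSq {n : ℕ} (hn : 2 ≤ n) (i : ℕ) (x : ℤ) : sGen n i (sGen n i x) = x := by
  rw [st10_sApply hn i x, st10_sApply hn i (sFun n i x)]
  exact sFun_invol n i (st10_ndvd1 hn) x

lemma st10_sMulSelf {n : ℕ} (hn : 2 ≤ n) (i : ℕ) : sGen n i * sGen n i = 1 := by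
  ext x
  simp only [Equiv.Perm.mul_apply, Equiv.Perm.one_apply, st10_sSq hn]

lemma st10_sBounds {n : ℕ} (hn : 2 ≤ n) (i : ℕ) (x : ℤ) :
    x - 1 ≤ sGen n i x ∧ sGen n i x ≤ x + 1 := by
  rcases st10_sCases hn i x with ⟨_, e⟩ | ⟨_, e⟩ | ⟨_, _, e⟩ <;> omega

lemma st10_sLt {n : ℕ} (hn : 2 ≤ n) {i : ℕ} {a b : ℤ} (hab : a < b)
    (hns : ¬ ((n:ℤ) ∣ a - (i:ℤ) ∧ b = a + 1)) : sGen n i a < sGen n i b := by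
  have hn2 : (2:ℤ) ≤ (n:ℤ) := by exact_mod_cast hn
  rcases st10_sCases hn i a with ⟨ha, ea⟩ | ⟨ha, ea⟩ | ⟨ha1, ha2, ea⟩ <;>
    rcases st10_sCases hn i b with ⟨hb, eb⟩ | ⟨hb, eb⟩ | ⟨hb1, hb2, eb⟩ <;>
    rw [ea, eb]
  · omega
  · -- a ≡ i, b ≡ i+1
    have hd : (n:ℤ) ∣ b - a - 1 := by
      obtain ⟨k, hk⟩ := ha
      obtain ⟨m, hm⟩ := hb
      exact ⟨m - k, by rw [mul_sub]; linarith⟩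
    have hne : b ≠ a + 1 := fun h => hns ⟨ha, h⟩
    have hpos : 0 < b - a - 1 := by omega
    have := Int.le_of_dvd hpos hd
    omega
  · have hne : b ≠ a + 1 := fun h => hns ⟨ha, h⟩
    omega
  · omega
  · omega
  · omega
  · omega
  · -- a ≢, b ≡ i+1
    have hne : b ≠ a + 1 := by
      intro h
      obtain ⟨k, hk⟩ := hb
      exact ha1 ⟨k, by linarith [h]⟩
    omega
  · omega

/-- The inversion set computing `ellA`. -/
def st10_invSet (n : ℕ) (w : Equiv.Perm ℤ) : Set (ℤ × ℤ) :=
  {p : ℤ × ℤ | p.1 < p.2 ∧ 1 ≤ p.2 ∧ p.2 ≤ (n : ℤ) ∧ w p.2 < w p.1}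

lemma st10_ellA_eq (n : ℕ) (w : Equiv.Perm ℤ) : ellA n w = (st10_invSet n w).ncard := rfl

lemma st10_invFin {n : ℕ} (hn : 2 ≤ n) (w : Equiv.Perm ℤ)
    (hper : ∀ x : ℤ, w (x + (n:ℤ)) = w x + (n:ℤ)) : (st10_invSet n w).Finite := by
  have hn2 : (2:ℤ) ≤ (n:ℤ) := by exact_mod_cast hn
  have hne : (Finset.Icc (1:ℤ) (n:ℤ)).Nonempty := ⟨1, Finset.mem_Icc.mpr ⟨le_refl _, by omega⟩⟩
  set C := (Finset.Icc (1:ℤ) (n:ℤ)).sup' hne (fun r => w r - r) with hC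
  set D := (Finset.Icc (1:ℤ) (n:ℤ)).inf' hne (fun r => w r) with hD
  have hub : ∀ x : ℤ, w x ≤ x + C := by
    intro x
    have h0 : (0:ℤ) < (n:ℤ) := by omega
    set r := (x - 1) % (n:ℤ) + 1 with hr
    set k := (x - 1) / (n:ℤ) with hk
    have hdm := Int.mul_ediv_add_emod (x - 1) (n:ℤ)
    have hx : x = r + k * (n:ℤ) := by
      rw [hr, hk]
      rw [mul_comm]
      omega
    have hr1 : 1 ≤ r := by
      have := Int.emod_nonneg (x - 1) (show (n:ℤ) ≠ 0 by omega)
      omega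
    have hr2 : r ≤ (n:ℤ) := by
      have := Int.emod_lt_of_pos (x - 1) h0
      omega
    have hmem : r ∈ Finset.Icc (1:ℤ) (n:ℤ) := Finset.mem_Icc.mpr ⟨hr1, hr2⟩
    have hle : w r - r ≤ C := Finset.le_sup' (fun r => w r - r) hmem
    have hwx : w x = w r + k * (n:ℤ) := by
      rw [hx]; exact st10_perInt hper k r
    linarith
  have hlb : ∀ b : ℤ, 1 ≤ b → b ≤ (n:ℤ) → D ≤ w b := fun b h1 h2 =>
    Finset.inf'_le (fun r => w r) (Finset.mem_Icc.mpr ⟨h1, h2⟩)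
  apply Set.Finite.subset ((Set.finite_Icc (D - C) (n:ℤ)).prod (Set.finite_Icc (1:ℤ) (n:ℤ)))
  rintro ⟨a, b⟩ ⟨h1, h2, h3, h4⟩
  simp only [Set.mem_prod, Set.mem_Icc]
  refine ⟨⟨?_, by omega⟩, h2, h3⟩
  have hu := hub a
  have hl := hlb b h2 h3
  simp only at h4
  linarith

/-- The shifting bijection on inversion sets. -/
def st10_sig (n i : ℕ) (p : ℤ × ℤ) : ℤ × ℤ :=
  if sGen n i p.2 < 1 then (sGen n i p.1 + (n:ℤ), sGen n i p.2 + (n:ℤ))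
  else if (n:ℤ) < sGen n i p.2 then (sGen n i p.1 - (n:ℤ), sGen n i p.2 - (n:ℤ))
  else (sGen n i p.1, sGen n i p.2)

lemma st10_sigShift {n : ℕ} (hn : 2 ≤ n) (i : ℕ) (a b : ℤ) (hb1 : 1 ≤ b) (hb2 : b ≤ (n:ℤ)) :
    ∃ t : ℤ, (t = -1 ∨ t = 0 ∨ t = 1) ∧
      st10_sig n i (a, b) = (sGen n i a + t * (n:ℤ), sGen n i b + t * (n:ℤ)) ∧
      1 ≤ sGen n i b + t * (n:ℤ) ∧ sGen n i b + t * (n:ℤ) ≤ (n:ℤ) := by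
  have hn2 : (2:ℤ) ≤ (n:ℤ) := by exact_mod_cast hn
  have hb := st10_sBounds hn i b
  unfold st10_sig
  dsimp only
  by_cases h1 : sGen n i b < 1
  · refine ⟨1, by norm_num, ?_, by omega, by omega⟩
    rw [if_pos h1]
    simp only [Prod.mk.injEq]
    constructor <;> ring
  · by_cases h2 : (n:ℤ) < sGen n i b
    · refine ⟨-1, by norm_num, ?_, by omega, by omega⟩
      rw [if_neg h1, if_pos h2]
      simp only [Prod.mk.injEq]
      constructor <;> ring
    · refine ⟨0, by norm_num, ?_, by omega, by omega⟩
      rw [if_neg h1, if_neg h2]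
      simp only [Prod.mk.injEq]
      constructor <;> ring

lemma st10_sigSig {n : ℕ} (hn : 2 ≤ n) (i : ℕ) (a b : ℤ) (hb1 : 1 ≤ b) (hb2 : b ≤ (n:ℤ)) :
    st10_sig n i (st10_sig n i (a, b)) = (a, b) := by
  have hn2 : (2:ℤ) ≤ (n:ℤ) := by exact_mod_cast hn
  obtain ⟨t, ht, heq, h1, h2⟩ := st10_sigShift hn i a b hb1 hb2
  rw [heq]
  have e1 : sGen n i (sGen n i a + t * (n:ℤ)) = a + t * (n:ℤ) := by
    rw [st10_perInt (st10_sPer hn i) t, st10_sSq hn]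
  have e2 : sGen n i (sGen n i b + t * (n:ℤ)) = b + t * (n:ℤ) := by
    rw [st10_perInt (st10_sPer hn i) t, st10_sSq hn]
  unfold st10_sig
  dsimp only
  rw [e1, e2]
  rcases ht with rfl | rfl | rfl
  · rw [if_pos (by omega : b + (-1) * (n:ℤ) < 1)]
    simp only [Prod.mk.injEq]
    constructor <;> ring
  · rw [if_neg (by omega : ¬ (b + 0 * (n:ℤ) < 1)), if_neg (by omega : ¬ ((n:ℤ) < b + 0 * (n:ℤ)))]
    simp only [Prod.mk.injEq]
    constructor <;> ring
  · rw [if_neg (by omega : ¬ (b + 1 * (n:ℤ) < 1)), if_pos (by omega : (n:ℤ) < b + 1 * (n:ℤ))]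
    simp only [Prod.mk.injEq]
    constructor <;> ring

lemma st10_sigMapsTo {n : ℕ} (hn : 2 ≤ n) {i : ℕ} (hi : i < n) (w : Equiv.Perm ℤ)
    (hper : ∀ x : ℤ, w (x + (n:ℤ)) = w x + (n:ℤ)) :
    Set.MapsTo (st10_sig n i) (st10_invSet n (w * sGen n i) \ {((i:ℤ), (i:ℤ)+1)})
      (st10_invSet n w \ {((i:ℤ), (i:ℤ)+1)}) := by
  have hn2 : (2:ℤ) ≤ (n:ℤ) := by exact_mod_cast hn
  have hi' : (i:ℤ) < (n:ℤ) := by exact_mod_cast hi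
  have hi0 : (0:ℤ) ≤ (i:ℤ) := Int.natCast_nonneg i
  rintro ⟨a, b⟩ ⟨⟨hab, hb1, hb2, hinv⟩, hne⟩
  simp only [Set.mem_singleton_iff, Prod.mk.injEq, not_and] at hne
  simp only at hab hb1 hb2
  simp only [Equiv.Perm.mul_apply] at hinv
  -- nonspecial
  have hns : ¬ ((n:ℤ) ∣ a - (i:ℤ) ∧ b = a + 1) := by
    rintro ⟨hd, hb⟩
    have h0 : a - (i:ℤ) = 0 := st10_dvd_small (by omega) hd (by omega) (by omega)
    exact hne (by omega) (by omega)
  have hlt := st10_sLt hn hab hns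
  obtain ⟨t, ht, heq, hq1, hq2⟩ := st10_sigShift hn i a b hb1 hb2
  rw [Set.mem_diff, heq]
  constructor
  · refine ⟨?_, ?_, ?_, ?_⟩
    · exact add_lt_add_left hlt _
    · exact hq1
    · exact hq2
    · show w (sGen n i b + t * (n:ℤ)) < w (sGen n i a + t * (n:ℤ))
      rw [st10_perInt hper t, st10_perInt hper t]
      exact add_lt_add_left hinv _
  · intro hmem
    simp only [Set.mem_singleton_iff, Prod.mk.injEq] at hmem
    obtain ⟨e1, e2⟩ := hmem
    have e1' : a + t * (n:ℤ) = (i:ℤ) + 1 := by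
      have h := congrArg (sGen n i) e1
      rw [st10_perInt (st10_sPer hn i) t, st10_sSq hn,
        st10_sAdd hn (show (n:ℤ) ∣ (i:ℤ) - (i:ℤ) by simp)] at h
      exact h
    have e2' : b + t * (n:ℤ) = (i:ℤ) := by
      have h := congrArg (sGen n i) e2
      rw [st10_perInt (st10_sPer hn i) t, st10_sSq hn,
        st10_sSub hn (show (n:ℤ) ∣ ((i:ℤ)+1) - ((i:ℤ)+1) by simp)] at h
      omega
    omega

lemma st10_ellSucc {n : ℕ} (hn : 2 ≤ n) {i : ℕ} (hi : i < n) (w : Equiv.Perm ℤ)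
    (hper : ∀ x : ℤ, w (x + (n:ℤ)) = w x + (n:ℤ))
    (hlt : w (i:ℤ) < w ((i:ℤ)+1)) :
    ellA n (w * sGen n i) = ellA n w + 1 := by
  have hn2 : (2:ℤ) ≤ (n:ℤ) := by exact_mod_cast hn
  have hi' : (i:ℤ) < (n:ℤ) := by exact_mod_cast hi
  have hi0 : (0:ℤ) ≤ (i:ℤ) := Int.natCast_nonneg i
  have e_si : sGen n i (i:ℤ) = (i:ℤ) + 1 :=
    st10_sAdd hn (show (n:ℤ) ∣ (i:ℤ) - (i:ℤ) by simp)
  have e_si1 : sGen n i ((i:ℤ)+1) = (i:ℤ) := by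
    rw [st10_sSub hn (show (n:ℤ) ∣ ((i:ℤ)+1) - ((i:ℤ)+1) by simp)]
    ring
  have hper' : ∀ x : ℤ, (w * sGen n i) (x + (n:ℤ)) = (w * sGen n i) x + (n:ℤ) := by
    intro x
    simp only [Equiv.Perm.mul_apply]
    rw [st10_sPer hn i x]
    exact hper _
  have hss : (w * sGen n i) * sGen n i = w := by
    rw [mul_assoc, st10_sMulSelf hn i, mul_one]
  set p₀ : ℤ × ℤ := ((i:ℤ), (i:ℤ)+1) with hp₀def
  have hp₀ws : p₀ ∈ st10_invSet n (w * sGen n i) := by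
    refine ⟨by show (i:ℤ) < (i:ℤ)+1; omega, by show (1:ℤ) ≤ (i:ℤ)+1; omega,
      by show (i:ℤ)+1 ≤ (n:ℤ); omega, ?_⟩
    show (w * sGen n i) ((i:ℤ)+1) < (w * sGen n i) (i:ℤ)
    simp only [Equiv.Perm.mul_apply, e_si, e_si1]
    exact hlt
  have hp₀w : p₀ ∉ st10_invSet n w := by
    rintro ⟨-, -, -, h⟩
    change w ((i:ℤ)+1) < w (i:ℤ) at h
    omega
  have hfinws : (st10_invSet n (w * sGen n i)).Finite := st10_invFin hn _ hper'
  have hfinw : (st10_invSet n w).Finite := st10_invFin hn w hper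
  set S₁ := st10_invSet n (w * sGen n i) \ {p₀} with hS₁
  set S₂ := st10_invSet n w \ {p₀} with hS₂
  have hmt1 : Set.MapsTo (st10_sig n i) S₁ S₂ := st10_sigMapsTo hn hi w hper
  have hmt2 : Set.MapsTo (st10_sig n i) S₂ S₁ := by
    have h := st10_sigMapsTo hn hi (w * sGen n i) hper'
    rw [hss] at h
    exact h
  have hinvOn : Set.InvOn (st10_sig n i) (st10_sig n i) S₁ S₂ := by
    constructor
    · rintro ⟨a, b⟩ ⟨⟨-, hb1, hb2, -⟩, -⟩
      exact st10_sigSig hn i a b hb1 hb2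
    · rintro ⟨a, b⟩ ⟨⟨-, hb1, hb2, -⟩, -⟩
      exact st10_sigSig hn i a b hb1 hb2
  have hbij : Set.BijOn (st10_sig n i) S₁ S₂ := hinvOn.bijOn hmt1 hmt2
  have h3 : S₂.ncard = S₁.ncard := by
    rw [← hbij.image_eq]
    exact Set.ncard_image_of_injOn hbij.injOn
  have h1 : S₁.ncard + 1 = (st10_invSet n (w * sGen n i)).ncard :=
    Set.ncard_diff_singleton_add_one hp₀ws hfinws
  have h2 : S₂ = st10_invSet n w := Set.diff_singleton_eq_self hp₀w
  rw [st10_ellA_eq, st10_ellA_eq, ← h1, ← h2, h3]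

/-- The fixed-point counting set computing `fTw`. -/
def st10_Fset (n : ℕ) (w : Equiv.Perm ℤ) : Set ℤ :=
  {a : ℤ | 1 ≤ a ∧ a ≤ (n : ℤ) ∧ (n : ℤ) ∣ w a - (1 - a)}

lemma st10_fTw_eq (n : ℕ) (w : Equiv.Perm ℤ) : fTw n w = (st10_Fset n w).ncard / 2 := rfl

lemma st10_FsetFin (n : ℕ) (w : Equiv.Perm ℤ) : (st10_Fset n w).Finite :=
  (Set.finite_Icc (1:ℤ) (n:ℤ)).subset fun a ⟨h1, h2, _⟩ => Set.mem_Icc.mpr ⟨h1, h2⟩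

lemma st10_caseA {n : ℕ} (hn : 2 ≤ n) {i : ℕ} (hi : i < n) (w : Equiv.Perm ℤ)
    (hper : ∀ x : ℤ, w (x + (n:ℤ)) = w x + (n:ℤ))
    (hw1 : w ((i:ℤ)+1) = w (i:ℤ) - 1)
    (hP : (n:ℤ) ∣ w (i:ℤ) + (i:ℤ) - 1) :
    ellA n w = ellA n (w * sGen n i) + 1 ∧
      (st10_Fset n w).ncard = (st10_Fset n (w * sGen n i)).ncard + 2 := by
  have hn2 : (2:ℤ) ≤ (n:ℤ) := by exact_mod_cast hn
  have hi' : (i:ℤ) < (n:ℤ) := by exact_mod_cast hi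
  have hi0 : (0:ℤ) ≤ (i:ℤ) := Int.natCast_nonneg i
  have e_si : sGen n i (i:ℤ) = (i:ℤ) + 1 :=
    st10_sAdd hn (show (n:ℤ) ∣ (i:ℤ) - (i:ℤ) by simp)
  have e_si1 : sGen n i ((i:ℤ)+1) = (i:ℤ) := by
    rw [st10_sSub hn (show (n:ℤ) ∣ ((i:ℤ)+1) - ((i:ℤ)+1) by simp)]
    ring
  have hper' : ∀ x : ℤ, (w * sGen n i) (x + (n:ℤ)) = (w * sGen n i) x + (n:ℤ) := by
    intro x
    simp only [Equiv.Perm.mul_apply]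
    rw [st10_sPer hn i x]
    exact hper _
  have hss : (w * sGen n i) * sGen n i = w := by
    rw [mul_assoc, st10_sMulSelf hn i, mul_one]
  -- length part
  have hlt : (w * sGen n i) (i:ℤ) < (w * sGen n i) ((i:ℤ)+1) := by
    simp only [Equiv.Perm.mul_apply, e_si, e_si1]
    omega
  have hell := st10_ellSucc hn hi (w * sGen n i) hper' hlt
  rw [hss] at hell
  refine ⟨hell, ?_⟩
  -- F-set part
  set ai : ℤ := if i = 0 then (n:ℤ) else (i:ℤ) with hai
  have hai1 : 1 ≤ ai ∧ ai ≤ (n:ℤ) := by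
    by_cases h : i = 0 <;> simp only [hai, h, if_true, if_false] <;> omega
  have haid : (n:ℤ) ∣ ai - (i:ℤ) := by
    by_cases h : i = 0
    · simp [hai, h]
    · simp [hai, h]
  have huniq1 : ∀ a : ℤ, 1 ≤ a → a ≤ (n:ℤ) → (n:ℤ) ∣ a - (i:ℤ) → a = ai := by
    intro a h1 h2 hd
    obtain ⟨k, hk⟩ := hd
    obtain ⟨m, hm⟩ := haid
    have hd2 : (n:ℤ) ∣ a - ai := ⟨k - m, by rw [mul_sub]; linarith⟩
    have := st10_dvd_small (by omega) hd2 (by omega) (by omega)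
    omega
  have huniq2 : ∀ a : ℤ, 1 ≤ a → a ≤ (n:ℤ) → (n:ℤ) ∣ a - ((i:ℤ)+1) → a = (i:ℤ)+1 := by
    intro a h1 h2 hd
    have := st10_dvd_small (by omega) hd (by omega) (by omega)
    omega
  have hne : ai ≠ (i:ℤ) + 1 := by
    intro h
    obtain ⟨k, hk⟩ := haid
    rw [h] at hk
    exact st10_ndvd1 hn ⟨k, by linarith⟩
  have hwai : w ai = w (i:ℤ) + (ai - (i:ℤ)) := st10_perCongr hper haid
  have hsai : sGen n i ai = ai + 1 := st10_sAdd hn haid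
  have hwai1 : w (ai + 1) = w (i:ℤ) - 1 + (ai - (i:ℤ)) := by
    have hd : (n:ℤ) ∣ (ai + 1) - ((i:ℤ)+1) := by
      have h2 : ai + 1 - ((i:ℤ)+1) = ai - (i:ℤ) := by ring
      rw [h2]; exact haid
    have h3 := st10_perCongr hper hd
    rw [hw1] at h3
    have h4 : ai + 1 - ((i:ℤ)+1) = ai - (i:ℤ) := by ring
    rw [h4] at h3
    linarith
  obtain ⟨k, hk⟩ := hP
  obtain ⟨m, hm⟩ := haid
  have hmem1 : ai ∈ st10_Fset n w := by
    refine ⟨hai1.1, hai1.2, ⟨k + 2*m, ?_⟩⟩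
    have h1 : (n:ℤ) * (k + 2*m) = (n:ℤ)*k + 2*((n:ℤ)*m) := by ring
    rw [hwai, h1]
    linarith
  have hmem2 : (i:ℤ)+1 ∈ st10_Fset n w := by
    refine ⟨by omega, by omega, ⟨k, ?_⟩⟩
    rw [hw1]
    linarith
  have hnotmem1 : ai ∉ st10_Fset n (w * sGen n i) := by
    rintro ⟨-, -, hd⟩
    rw [show (w * sGen n i) ai = w (ai + 1) from by
      simp only [Equiv.Perm.mul_apply]; rw [hsai]] at hd
    obtain ⟨l, hl⟩ := hd
    apply st10_ndvd1 hn
    refine ⟨k + 2*m - l, ?_⟩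
    have h1 : (n:ℤ) * (k + 2*m - l) = (n:ℤ)*k + 2*((n:ℤ)*m) - (n:ℤ)*l := by ring
    rw [h1]
    linarith [hwai1]
  have hnotmem2 : (i:ℤ)+1 ∉ st10_Fset n (w * sGen n i) := by
    rintro ⟨-, -, hd⟩
    rw [show (w * sGen n i) ((i:ℤ)+1) = w (i:ℤ) from by
      simp only [Equiv.Perm.mul_apply]; rw [e_si1]] at hd
    obtain ⟨l, hl⟩ := hd
    apply st10_ndvd1 hn
    refine ⟨l - k, ?_⟩
    rw [mul_sub]
    linarith
  have hsetEq : st10_Fset n w = insert ai (insert ((i:ℤ)+1) (st10_Fset n (w * sGen n i))) := by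
    ext a
    simp only [Set.mem_insert_iff]
    constructor
    · rintro ⟨h1, h2, hd⟩
      by_cases hca : a = ai
      · exact Or.inl hca
      by_cases hcb : a = (i:ℤ)+1
      · exact Or.inr (Or.inl hcb)
      have hd1 : ¬ (n:ℤ) ∣ a - (i:ℤ) := fun h => hca (huniq1 a h1 h2 h)
      have hd2 : ¬ (n:ℤ) ∣ a - ((i:ℤ)+1) := fun h => hcb (huniq2 a h1 h2 h)
      have hsa : sGen n i a = a := st10_sId hn hd1 hd2
      refine Or.inr (Or.inr ⟨h1, h2, ?_⟩)
      rw [show (w * sGen n i) a = w a from by simp only [Equiv.Perm.mul_apply]; rw [hsa]]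
      exact hd
    · rintro (rfl | rfl | h)
      · exact hmem1
      · exact hmem2
      · obtain ⟨h1, h2, hd⟩ := h
        by_cases hca : a = ai
        · exact absurd (hca ▸ ⟨h1, h2, hd⟩ : ai ∈ st10_Fset n (w * sGen n i)) hnotmem1
        by_cases hcb : a = (i:ℤ)+1
        · exact absurd (hcb ▸ ⟨h1, h2, hd⟩ : (i:ℤ)+1 ∈ st10_Fset n (w * sGen n i)) hnotmem2
        have hd1 : ¬ (n:ℤ) ∣ a - (i:ℤ) := fun h => hca (huniq1 a h1 h2 h)
        have hd2 : ¬ (n:ℤ) ∣ a - ((i:ℤ)+1) := fun h => hcb (huniq2 a h1 h2 h)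
        have hsa : sGen n i a = a := st10_sId hn hd1 hd2
        refine ⟨h1, h2, ?_⟩
        rw [show (w * sGen n i) a = w a from by
          simp only [Equiv.Perm.mul_apply]; rw [hsa]] at hd
        exact hd
  have hfinws : (st10_Fset n (w * sGen n i)).Finite := st10_FsetFin n _
  rw [hsetEq]
  rw [Set.ncard_insert_of_notMem (by
      simp only [Set.mem_insert_iff]
      rintro (h | h)
      · exact hne h
      · exact hnotmem1 h) (hfinws.insert _),
    Set.ncard_insert_of_notMem hnotmem2 hfinws]

/-- The map `A = τ s τ`. -/
def st10_Amap (n i : ℕ) (x : ℤ) : ℤ := (n:ℤ) + 1 - sGen n i ((n:ℤ) + 1 - x)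

lemma st10_AmapInvol {n : ℕ} (hn : 2 ≤ n) (i : ℕ) (x : ℤ) :
    st10_Amap n i (st10_Amap n i x) = x := by
  unfold st10_Amap
  rw [show (n:ℤ) + 1 - ((n:ℤ) + 1 - sGen n i ((n:ℤ) + 1 - x)) = sGen n i ((n:ℤ) + 1 - x) from by
    ring, st10_sSq hn]
  ring

lemma st10_AmapCongr {n : ℕ} (hn : 2 ≤ n) (i : ℕ) {x y : ℤ} (h : (n:ℤ) ∣ x - y) :
    st10_Amap n i x = st10_Amap n i y + (x - y) := by
  unfold st10_Amap
  have hd : (n:ℤ) ∣ ((n:ℤ) + 1 - x) - ((n:ℤ) + 1 - y) := by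
    obtain ⟨k, hk⟩ := h
    exact ⟨-k, by rw [mul_neg]; linarith⟩
  have := st10_perCongr (st10_sPer hn i) hd
  rw [this]
  ring

/-- The canonical representative in `[1, n]` of a residue class. -/
def st10_rmap (n : ℕ) (x : ℤ) : ℤ := (x - 1) % (n:ℤ) + 1

lemma st10_rmapMem {n : ℕ} (hn : 2 ≤ n) (x : ℤ) :
    1 ≤ st10_rmap n x ∧ st10_rmap n x ≤ (n:ℤ) := by
  have hn2 : (2:ℤ) ≤ (n:ℤ) := by exact_mod_cast hn
  unfold st10_rmap
  have h1 := Int.emod_nonneg (x - 1) (show (n:ℤ) ≠ 0 by omega)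
  have h2 := Int.emod_lt_of_pos (x - 1) (show (0:ℤ) < (n:ℤ) by omega)
  omega

lemma st10_rmapDvd {n : ℕ} (hn : 2 ≤ n) (x : ℤ) : (n:ℤ) ∣ x - st10_rmap n x := by
  have h := Int.mul_ediv_add_emod (x - 1) (n:ℤ)
  exact ⟨(x - 1) / (n:ℤ), by unfold st10_rmap; linarith⟩

lemma st10_rmapEq {n : ℕ} (hn : 2 ≤ n) {x a : ℤ} (h1 : 1 ≤ a) (h2 : a ≤ (n:ℤ))
    (hd : (n:ℤ) ∣ x - a) : st10_rmap n x = a := by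
  have hn2 : (2:ℤ) ≤ (n:ℤ) := by exact_mod_cast hn
  have hm := st10_rmapMem hn x
  have hd2 : (n:ℤ) ∣ st10_rmap n x - a := by
    obtain ⟨k, hk⟩ := st10_rmapDvd hn x
    obtain ⟨l, hl⟩ := hd
    exact ⟨l - k, by rw [mul_sub]; linarith⟩
  have := st10_dvd_small (by omega) hd2 (by omega) (by omega)
  omega

lemma st10_partB {n : ℕ} (hn : 2 ≤ n) (w : Equiv.Perm ℤ)
    (hper : ∀ x : ℤ, w (x + (n:ℤ)) = w x + (n:ℤ)) (i : ℕ) :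
    (st10_Fset n (sGen n i * w * (tauN n * sGen n i * tauN n))).ncard =
      (st10_Fset n w).ncard := by
  have hn2 : (2:ℤ) ≤ (n:ℤ) := by exact_mod_cast hn
  set w' := sGen n i * w * (tauN n * sGen n i * tauN n) with hw'
  have hw'A : ∀ a : ℤ, w' a = sGen n i (w (st10_Amap n i a)) := by
    intro a
    simp only [hw', Equiv.Perm.mul_apply]
    rfl
  set g : ℤ → ℤ := fun a => st10_rmap n (st10_Amap n i a) with hg
  -- key dvd facts
  have hgd : ∀ a : ℤ, (n:ℤ) ∣ st10_Amap n i a - g a := by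
    intro a
    exact st10_rmapDvd hn _
  have hgg : ∀ a : ℤ, 1 ≤ a → a ≤ (n:ℤ) → g (g a) = a := by
    intro a h1 h2
    have hd : (n:ℤ) ∣ st10_Amap n i (g a) - a := by
      obtain ⟨k, hk⟩ := hgd a
      have := st10_AmapCongr hn i (show (n:ℤ) ∣ g a - st10_Amap n i a from
        ⟨-k, by rw [mul_neg]; linarith⟩)
      rw [st10_AmapInvol hn] at this
      exact ⟨-k, by rw [mul_neg]; linarith⟩
    exact st10_rmapEq hn h1 h2 hd
  -- condition transfer
  have key : ∀ a : ℤ, ((n:ℤ) ∣ w' a - (1 - a)) ↔ ((n:ℤ) ∣ w (g a) - (1 - g a)) := by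
    intro a
    -- step 1: n ∣ w' a - (1-a) ↔ n ∣ (n+1 - w' a) - a
    have step1 : ∀ (v : ℤ) (c : ℤ), ((n:ℤ) ∣ v - (1 - c)) ↔ ((n:ℤ) ∣ ((n:ℤ)+1 - v) - c) := by
      intro v c
      constructor
      · intro h
        have he : ((n:ℤ)+1 - v) - c = (n:ℤ) - (v - (1 - c)) := by ring
        rw [he]
        exact dvd_sub (dvd_refl _) h
      · intro h
        have he : v - (1 - c) = (n:ℤ) - (((n:ℤ)+1 - v) - c) := by ring
        rw [he]
        exact dvd_sub (dvd_refl _) h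
    -- step 2: n+1 - w' a = Amap (n+1 - w (Amap a))
    have step2' : ∀ X : ℤ, st10_Amap n i ((n:ℤ)+1 - X) = (n:ℤ)+1 - sGen n i X := by
      intro X
      unfold st10_Amap
      rw [show (n:ℤ) + 1 - ((n:ℤ)+1 - X) = X from by ring]
    have step2 : (n:ℤ)+1 - w' a = st10_Amap n i ((n:ℤ)+1 - w (st10_Amap n i a)) := by
      rw [hw'A a, step2']
    -- step 3: n ∣ Amap X - Amap Y ↔ n ∣ X - Y  (specialized)
    have step3 : ∀ X Y : ℤ, ((n:ℤ) ∣ st10_Amap n i X - st10_Amap n i Y) ↔ ((n:ℤ) ∣ X - Y) := by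
      intro X Y
      constructor
      · intro h
        have := st10_AmapCongr hn i (x := st10_Amap n i X) (y := st10_Amap n i Y) h
        rw [st10_AmapInvol hn, st10_AmapInvol hn] at this
        have he : X - Y = st10_Amap n i X - st10_Amap n i Y := by linarith
        rw [he]
        exact h
      · intro h
        rw [st10_AmapCongr hn i h]
        simpa using h
    rw [step1 (w' a) a, step2]
    have hAa : st10_Amap n i ((i:ℤ)*0 + a) = st10_Amap n i a := by norm_num
    -- rewrite a = Amap (Amap a)
    have ha' : a = st10_Amap n i (st10_Amap n i a) := (st10_AmapInvol hn i a).symm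
    rw [show ((n:ℤ) ∣ st10_Amap n i ((n:ℤ)+1 - w (st10_Amap n i a)) - a) ↔
        ((n:ℤ) ∣ st10_Amap n i ((n:ℤ)+1 - w (st10_Amap n i a)) -
          st10_Amap n i (st10_Amap n i a)) from by rw [← ha'],
      step3]
    -- now: n ∣ (n+1 - w (Amap a)) - Amap a ↔ n ∣ w (g a) - (1 - g a)
    rw [← step1 (w (st10_Amap n i a)) (st10_Amap n i a)]
    -- transfer along n ∣ Amap a - g a
    constructor
    · intro h
      obtain ⟨k, hk⟩ := hgd a
      have hw2 : w (st10_Amap n i a) = w (g a) + (st10_Amap n i a - g a) :=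
        st10_perCongr hper ⟨k, hk⟩
      obtain ⟨l, hl⟩ := h
      exact ⟨l - 2*k, by rw [mul_sub]; have h3 : (n:ℤ)*(2*k) = 2*((n:ℤ)*k) := by ring
                         rw [h3]; linarith⟩
    · intro h
      obtain ⟨k, hk⟩ := hgd a
      have hw2 : w (st10_Amap n i a) = w (g a) + (st10_Amap n i a - g a) :=
        st10_perCongr hper ⟨k, hk⟩
      obtain ⟨l, hl⟩ := h
      exact ⟨l + 2*k, by rw [mul_add]; have h3 : (n:ℤ)*(2*k) = 2*((n:ℤ)*k) := by ring
                         rw [h3]; linarith⟩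
  -- bijection
  have hbij : Set.BijOn g (st10_Fset n w') (st10_Fset n w) := by
    refine ⟨?_, ?_, ?_⟩
    · rintro a ⟨h1, h2, hd⟩
      have hm := st10_rmapMem hn (st10_Amap n i a)
      exact ⟨hm.1, hm.2, (key a).mp hd⟩
    · rintro a ⟨h1, h2, -⟩ a' ⟨h1', h2', -⟩ hgaa
      have := hgg a h1 h2
      rw [hgaa, hgg a' h1' h2'] at this
      exact this.symm
    · rintro b ⟨h1, h2, hd⟩
      refine ⟨g b, ?_, hgg b h1 h2⟩
      have hm := st10_rmapMem hn (st10_Amap n i b)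
      refine ⟨hm.1, hm.2, ?_⟩
      rw [key (g b), hgg b h1 h2]
      exact hd
  rw [← hbij.image_eq]
  exact (Set.ncard_image_of_injOn hbij.injOn).symm

end St10Aux

/-- Let `n ≥ 2`, let `w* = τ_n ∘ w ∘ τ_n`, and let
`I_* = {w ∈ S̃_n : w⁻¹ = w*}`. The function `f = fTw n` satisfies the three properties
characterizing Hultman's twisted absolute length: (a) `f(id) = 0`; (b) `f(s w s*) = f(w)` for
`w ∈ I_*` and every simple generator `s = s_i`, `0 ≤ i ≤ n−1`; (c) if `w ∈ I_*` and `w s ∈ I_*`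
then `f(w s) − f(w) = ℓ(w s) − ℓ(w)` as integers. -/
theorem statement10 (n : ℕ) (hn : 2 ≤ n) :
    fTw n 1 = 0 ∧
    (∀ w : Equiv.Perm ℤ, IsAffinePerm n w → w⁻¹ = tauN n * w * tauN n →
      ∀ i : ℕ, i ≤ n - 1 →
        fTw n (sGen n i * w * (tauN n * sGen n i * tauN n)) = fTw n w) ∧
    (∀ w : Equiv.Perm ℤ, IsAffinePerm n w → w⁻¹ = tauN n * w * tauN n →
      ∀ i : ℕ, i ≤ n - 1 →
        (w * sGen n i)⁻¹ = tauN n * (w * sGen n i) * tauN n →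
        (fTw n (w * sGen n i) : ℤ) - (fTw n w : ℤ) =
          (ellA n (w * sGen n i) : ℤ) - (ellA n w : ℤ)) := by
  have hn2 : (2:ℤ) ≤ (n:ℤ) := by exact_mod_cast hn
  refine ⟨?_, ?_, ?_⟩
  · -- part (a)
    have hfin : (st10_Fset n 1).Finite := st10_FsetFin n 1
    have hsub : (st10_Fset n 1).ncard ≤ 1 := by
      rw [Set.ncard_le_one hfin]
      rintro a ⟨h1a, h2a, hda⟩ b ⟨h1b, h2b, hdb⟩
      simp only [Equiv.Perm.one_apply] at hda hdb
      obtain ⟨k, hk⟩ := hda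
      obtain ⟨m, hm⟩ := hdb
      have hd2 : 2*(a - b) = (n:ℤ)*(k - m) := by rw [mul_sub]; linarith
      have hk1 : k - m ≤ 1 := by
        by_contra hcon
        push_neg at hcon
        have h2 : (2:ℤ) ≤ k - m := by omega
        have := mul_le_mul_of_nonneg_left h2 (show (0:ℤ) ≤ (n:ℤ) by omega)
        nlinarith
      have hk2 : -1 ≤ k - m := by
        by_contra hcon
        push_neg at hcon
        have h2 : k - m ≤ -2 := by omega
        have := mul_le_mul_of_nonneg_left h2 (show (0:ℤ) ≤ (n:ℤ) by omega)
        nlinarith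
      have hcases : k - m = -1 ∨ k - m = 0 ∨ k - m = 1 := by omega
      rcases hcases with hc | hc | hc
      · exfalso
        rw [hc] at hd2
        have h2n : (2:ℤ) ∣ (n:ℤ) := ⟨b - a, by linarith⟩
        obtain ⟨c, hc2⟩ := h2n
        have h2d : (2:ℤ) ∣ a - (1 - a) := ⟨c * k, by rw [hc2] at hk
                                                     rw [show (2:ℤ)*(c*k) = 2*c*k by ring]
                                                     linarith⟩
        obtain ⟨e, he⟩ := h2d
        omega
      · rw [hc, mul_zero] at hd2
        omega
      · exfalso
        rw [hc] at hd2
        have h2n : (2:ℤ) ∣ (n:ℤ) := ⟨a - b, by linarith⟩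
        obtain ⟨c, hc2⟩ := h2n
        have h2d : (2:ℤ) ∣ a - (1 - a) := ⟨c * k, by rw [hc2] at hk
                                                     rw [show (2:ℤ)*(c*k) = 2*c*k by ring]
                                                     linarith⟩
        obtain ⟨e, he⟩ := h2d
        omega
    rw [st10_fTw_eq]
    omega
  · -- part (b)
    intro w hw hI i hi
    rw [st10_fTw_eq, st10_fTw_eq, st10_partB hn w hw.1 i]
  · -- part (c)
    intro w hw hI i hi hI2
    have hiN : i < n := by omega
    have hi' : (i:ℤ) < (n:ℤ) := by exact_mod_cast hiN
    have hi0 : (0:ℤ) ≤ (i:ℤ) := Int.natCast_nonneg i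
    have hper := hw.1
    have e_si : sGen n i (i:ℤ) = (i:ℤ) + 1 :=
      st10_sAdd hn (show (n:ℤ) ∣ (i:ℤ) - (i:ℤ) by simp)
    have e_si1 : sGen n i ((i:ℤ)+1) = (i:ℤ) := by
      rw [st10_sSub hn (show (n:ℤ) ∣ ((i:ℤ)+1) - ((i:ℤ)+1) by simp)]
      ring
    -- pointwise consequences of the twisted-involution hypotheses
    have hIfun : ∀ y : ℤ, w⁻¹ y = (n:ℤ)+1 - w ((n:ℤ)+1 - y) := by
      intro y
      rw [hI]
      simp only [Equiv.Perm.mul_apply]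
      rfl
    have hwu : ∀ x : ℤ, w ((n:ℤ)+1 - w x) = (n:ℤ)+1 - x := by
      intro x
      have h := hIfun (w x)
      rw [Equiv.Perm.inv_def, Equiv.symm_apply_apply] at h
      linarith
    have hIfun2 : ∀ y : ℤ, (w * sGen n i)⁻¹ y =
        (n:ℤ)+1 - (w * sGen n i) ((n:ℤ)+1 - y) := by
      intro y
      rw [hI2]
      simp only [Equiv.Perm.mul_apply]
      rfl
    have hwu2 : ∀ x : ℤ, (w * sGen n i) ((n:ℤ)+1 - (w * sGen n i) x) = (n:ℤ)+1 - x := by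
      intro x
      have h := hIfun2 ((w * sGen n i) x)
      rw [Equiv.Perm.inv_def, Equiv.symm_apply_apply] at h
      linarith
    have hcomm : ∀ x : ℤ, (n:ℤ)+1 - w (sGen n i x) = sGen n i ((n:ℤ)+1 - w x) := by
      intro x
      have h1 := hwu2 x
      simp only [Equiv.Perm.mul_apply] at h1
      have h2 := hwu x
      have h3 : sGen n i ((n:ℤ)+1 - w (sGen n i x)) = (n:ℤ)+1 - w x :=
        w.injective (h1.trans h2.symm)
      calc (n:ℤ)+1 - w (sGen n i x)
          = sGen n i (sGen n i ((n:ℤ)+1 - w (sGen n i x))) := (st10_sSq hn i _).symm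
        _ = sGen n i ((n:ℤ)+1 - w x) := by rw [h3]
    have hui1 : (n:ℤ)+1 - w ((i:ℤ)+1) = sGen n i ((n:ℤ)+1 - w (i:ℤ)) := by
      have h := hcomm (i:ℤ)
      rw [e_si] at h
      exact h
    have hdich : (n:ℤ) ∣ ((n:ℤ)+1 - w (i:ℤ)) - (i:ℤ) ∨
        (n:ℤ) ∣ ((n:ℤ)+1 - w (i:ℤ)) - ((i:ℤ)+1) := by
      by_contra h
      push_neg at h
      have hfix : sGen n i ((n:ℤ)+1 - w (i:ℤ)) = (n:ℤ)+1 - w (i:ℤ) :=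
        st10_sId hn h.1 h.2
      rw [hfix] at hui1
      have heq : w ((i:ℤ)+1) = w (i:ℤ) := by linarith
      have := w.injective heq
      omega
    rcases hdich with hA | hB
    · -- case A : decrease
      have hsA : sGen n i ((n:ℤ)+1 - w (i:ℤ)) = ((n:ℤ)+1 - w (i:ℤ)) + 1 := st10_sAdd hn hA
      have hw1 : w ((i:ℤ)+1) = w (i:ℤ) - 1 := by
        rw [hsA] at hui1
        linarith
      have hP : (n:ℤ) ∣ w (i:ℤ) + (i:ℤ) - 1 := by
        obtain ⟨k, hk⟩ := hA
        exact ⟨1 - k, by rw [mul_sub, mul_one]; linarith⟩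
      obtain ⟨hell, hcard⟩ := st10_caseA hn hiN w hper hw1 hP
      have hf : fTw n w = fTw n (w * sGen n i) + 1 := by
        rw [st10_fTw_eq, st10_fTw_eq]
        omega
      rw [hf, hell]
      push_cast
      ring
    · -- case B : increase, apply case A to w * s
      have hsB : sGen n i ((n:ℤ)+1 - w (i:ℤ)) = ((n:ℤ)+1 - w (i:ℤ)) - 1 := st10_sSub hn hB
      have hwi1 : w ((i:ℤ)+1) = w (i:ℤ) + 1 := by
        rw [hsB] at hui1
        linarith
      have hper' : ∀ x : ℤ, (w * sGen n i) (x + (n:ℤ)) = (w * sGen n i) x + (n:ℤ) := by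
        intro x
        simp only [Equiv.Perm.mul_apply]
        rw [st10_sPer hn i x]
        exact hper _
      have hw1' : (w * sGen n i) ((i:ℤ)+1) = (w * sGen n i) (i:ℤ) - 1 := by
        simp only [Equiv.Perm.mul_apply, e_si, e_si1]
        omega
      have hP' : (n:ℤ) ∣ (w * sGen n i) (i:ℤ) + (i:ℤ) - 1 := by
        simp only [Equiv.Perm.mul_apply, e_si]
        obtain ⟨k, hk⟩ := hB
        exact ⟨1 - k, by rw [mul_sub, mul_one]; linarith⟩
      obtain ⟨hell, hcard⟩ := st10_caseA hn hiN (w * sGen n i) hper' hw1' hP'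
      have hss : (w * sGen n i) * sGen n i = w := by
        rw [mul_assoc, st10_sMulSelf hn i, mul_one]
      rw [hss] at hell hcard
      have hf : fTw n (w * sGen n i) = fTw n w + 1 := by
        rw [st10_fTw_eq, st10_fTw_eq]
        omega
      rw [hf, hell]
      push_cast
      ring
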